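/- Let (α_j) be an increasing sequence of positive real numbers converging to 1 with ∑_j (1 - α_j) < ∞, and let z = (z_j) be a sequence of complex numbers with |z_j| ≤ 1 for all j, such that there exists δ > 0 with |z_j - 1| > δ for all j. Then for each N ∈ ℕ such that 1 - α_j < δ/4 for all j ≥ N, the infinite product ∏_{j=N}^∞ (α_j - z_j)/(1 - α_j z_j) converges to a nonzero complex number. -/

import Mathlib

open Filter Finset Topology

theorem stmt_0 (α : ℕ → ℝ) (hmono : StrictMono α) (hpos : ∀ j, 0 < α j)
    (hlim : Tendsto α atTop (𝓝 1)) (hsum : Summable (fun j => 1 - α j))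
    (z : ℕ → ℂ) (hz : ∀ j, ‖z j‖ ≤ 1) (δ : ℝ) (hδ : 0 < δ)
    (hzδ : ∀ j, δ < ‖z j - 1‖) (N : ℕ) (hN : ∀ j, N ≤ j → 1 - α j < δ / 4) :
    ∃ L : ℂ, L ≠ 0 ∧
      Tendsto (fun M => ∏ j ∈ Finset.Icc N M, ((α j : ℂ) - z j) / (1 - (α j : ℂ) * z j))
        atTop (𝓝 L) := by
  set F : ℕ → ℂ := fun j => ((α j : ℂ) - z j) / (1 - (α j : ℂ) * z j) with hF
  have hα1 : ∀ j, α j < 1 := fun j =>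
    lt_of_lt_of_le (hmono (lt_add_one j)) (hmono.monotone.ge_of_tendsto hlim (j + 1))
  -- denominator bound
  have hden : ∀ j, N ≤ j → 3 * δ / 4 ≤ ‖1 - (α j : ℂ) * z j‖ := by
    intro j hj
    have h1 : (1 : ℂ) - (α j : ℂ) * z j = (1 - z j) - ((α j : ℂ) - 1) * z j := by ring
    have h2 : ‖(1 : ℂ) - z j‖ = ‖z j - 1‖ := by rw [← norm_neg]; ring_nf
    have h3 : ‖((α j : ℂ) - 1) * z j‖ ≤ 1 - α j := by
      rw [norm_mul]
      have : ‖((α j : ℂ) - 1)‖ = 1 - α j := by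
        rw [show ((α j : ℂ) - 1) = ((α j - 1 : ℝ) : ℂ) by push_cast; ring]
        rw [Complex.norm_real, Real.norm_eq_abs, abs_of_nonpos (by linarith [hα1 j])]
        ring
      calc ‖((α j : ℂ) - 1)‖ * ‖z j‖ ≤ (1 - α j) * 1 := by
            rw [this]; exact mul_le_mul_of_nonneg_left (hz j) (by linarith [hα1 j])
        _ = 1 - α j := by ring
    calc 3 * δ / 4 = δ - δ / 4 := by ring
      _ ≤ ‖(1 : ℂ) - z j‖ - ‖((α j : ℂ) - 1) * z j‖ := by
          have := hzδ j; have := hN j hj; rw [h2]; linarith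
      _ ≤ ‖(1 - z j) - ((α j : ℂ) - 1) * z j‖ := norm_sub_norm_le _ _
      _ = ‖1 - (α j : ℂ) * z j‖ := by rw [← h1]
  have hden0 : ∀ j, N ≤ j → (1 : ℂ) - (α j : ℂ) * z j ≠ 0 := by
    intro j hj h
    have := hden j hj
    rw [h, norm_zero] at this
    linarith
  have hnum0 : ∀ j, N ≤ j → (α j : ℂ) - z j ≠ 0 := by
    intro j hj h
    have hzj : z j = (α j : ℂ) := by linear_combination -h
    have : ‖z j - 1‖ = 1 - α j := by
      rw [hzj, show ((α j : ℂ) - 1) = ((α j - 1 : ℝ) : ℂ) by push_cast; ring,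
        Complex.norm_real, Real.norm_eq_abs, abs_of_nonpos (by linarith [hα1 j])]
      ring
    have h1 := hzδ j
    have h2 := hN j hj
    rw [this] at h1
    linarith
  have hF0 : ∀ j, N ≤ j → F j ≠ 0 := fun j hj => div_ne_zero (hnum0 j hj) (hden0 j hj)
  -- bound on ‖F j - 1‖
  have hFbound : ∀ j, N ≤ j → ‖F j - 1‖ ≤ 8 / (3 * δ) * (1 - α j) := by
    intro j hj
    have hd := hden0 j hj
    have hkey : F j - 1 = -((1 - (α j : ℂ)) * (1 + z j)) / (1 - (α j : ℂ) * z j) := by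
      rw [hF]
      field_simp
      ring
    rw [hkey, norm_div, norm_neg, norm_mul]
    have h1 : ‖(1 : ℂ) - (α j : ℂ)‖ = 1 - α j := by
      rw [show ((1 : ℂ) - (α j : ℂ)) = ((1 - α j : ℝ) : ℂ) by push_cast; ring,
        Complex.norm_real, Real.norm_eq_abs, abs_of_nonneg (by linarith [hα1 j])]
    have h2 : ‖(1 : ℂ) + z j‖ ≤ 2 := by
      calc ‖(1 : ℂ) + z j‖ ≤ ‖(1 : ℂ)‖ + ‖z j‖ := norm_add_le _ _
        _ ≤ 1 + 1 := by rw [norm_one]; exact add_le_add le_rfl (hz j)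
        _ = 2 := by norm_num
    have hd' := hden j hj
    have hδ4 : (0 : ℝ) < 3 * δ / 4 := by linarith
    rw [div_le_iff₀ (lt_of_lt_of_le hδ4 hd')]
    calc ‖(1 : ℂ) - (α j : ℂ)‖ * ‖1 + z j‖ ≤ (1 - α j) * 2 := by
          rw [h1]; exact mul_le_mul_of_nonneg_left h2 (by linarith [hα1 j])
      _ ≤ 8 / (3 * δ) * (1 - α j) * (3 * δ / 4) := by
          rw [show 8 / (3 * δ) * (1 - α j) * (3 * δ / 4) = (1 - α j) * 2 * ((8 / (3 * δ)) * (3 * δ / 4) / 2) by ring]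
          have : (8 / (3 * δ)) * (3 * δ / 4) / 2 = 1 := by field_simp; ring
          rw [this, mul_one]
      _ ≤ 8 / (3 * δ) * (1 - α j) * ‖1 - (α j : ℂ) * z j‖ := by
          apply mul_le_mul_of_nonneg_left hd'
          exact mul_nonneg (by positivity) (by linarith [hα1 j])
  -- the shifted log sequence
  set g : ℕ → ℂ := fun j => if N ≤ j then Complex.log (F j) else 0 with hg
  have hsummable : Summable g := by
    apply Summable.of_norm_bounded_eventually_nat (g := fun j => 3 / 2 * (8 / (3 * δ) * (1 - α j)))
      ((hsum.mul_left _).mul_left _)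
    have htend : Tendsto (fun j => 8 / (3 * δ) * (1 - α j)) atTop (𝓝 0) := by
      have : Tendsto (fun j => 1 - α j) atTop (𝓝 0) := by
        have := hlim.const_sub 1
        simpa using this
      simpa using this.const_mul (8 / (3 * δ))
    have hev : ∀ᶠ j in atTop, 8 / (3 * δ) * (1 - α j) ≤ 1 / 2 := by
      have := htend.eventually (eventually_le_nhds (by norm_num : (0:ℝ) < 1/2))
      exact this
    filter_upwards [hev, eventually_ge_atTop N] with j hsmall hj
    have hFb := hFbound j hj
    have hhalf : ‖F j - 1‖ ≤ 1 / 2 := le_trans hFb hsmall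
    have : g j = Complex.log (1 + (F j - 1)) := by
      simp [hg, hj]
    rw [this]
    calc ‖Complex.log (1 + (F j - 1))‖ ≤ 3 / 2 * ‖F j - 1‖ :=
          Complex.norm_log_one_add_half_le_self hhalf
      _ ≤ 3 / 2 * (8 / (3 * δ) * (1 - α j)) := by
          apply mul_le_mul_of_nonneg_left hFb; norm_num
  refine ⟨Complex.exp (∑' j, g j), Complex.exp_ne_zero _, ?_⟩
  have hsumtend : Tendsto (fun M => ∑ j ∈ Finset.range (M + 1), g j) atTop (𝓝 (∑' j, g j)) :=
    hsummable.hasSum.tendsto_sum_nat.comp (tendsto_add_atTop_nat 1)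
  have := hsumtend.cexp
  apply this.congr
  intro M
  have hIcc : ∑ j ∈ Finset.range (M + 1), g j = ∑ j ∈ Finset.Icc N M, Complex.log (F j) := by
    rw [hg]
    rw [← Finset.sum_filter]
    congr 1
    ext j
    simp [Nat.lt_succ_iff, and_comm]
  rw [hIcc, Complex.exp_sum]
  exact Finset.prod_congr rfl fun j hj =>
    Complex.exp_log (hF0 j (Finset.mem_Icc.mp hj).1)
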